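/- Let x^(k), v^(k), u^(k) be Plug-and-Play ADMM iterates with monotone parameter update ρ_{k+1} = γ ρ_k for all k ≥ 0, where ρ_0 > 0 and γ > 1, for a differentiable f with gradient bounded by L√n and a bounded denoiser with constant C ≥ 0. Then there exist x*, v*, u* ∈ ℝ^n such that ‖x^(k) − x*‖₂ → 0, ‖v^(k) − v*‖₂ → 0 and ‖u^(k) − u*‖₂ → 0 as k → ∞. -/

import Mathlib

open Filter Topology

/-- **Fixed point convergence of Plug-and-Play ADMM with monotone update rule.**
For Plug-and-Play ADMM iterates with monotone parameter update `ρ (k+1) = γ * ρ k` (γ > 1),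
a differentiable `f` with gradient bounded by `L * √n`, and a bounded denoiser with constant
`C ≥ 0`, the iterates `x, v, u` converge to some limits `x*, v*, u*`. -/
theorem plug_and_play_admm_fixed_point_monotone
    (n : ℕ) (hn : 1 ≤ n)
    (f : EuclideanSpace ℝ (Fin n) → ℝ) (L : ℝ)
    (hf : Differentiable ℝ f)
    (hgrad : ∀ z : EuclideanSpace ℝ (Fin n), ‖gradient f z‖ ≤ L * Real.sqrt n)
    (D : ℝ → EuclideanSpace ℝ (Fin n) → EuclideanSpace ℝ (Fin n)) (C : ℝ)
    (hC : 0 ≤ C)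
    (hD : ∀ σ : ℝ, 0 < σ → ∀ z : EuclideanSpace ℝ (Fin n),
      ‖D σ z - z‖ ^ 2 ≤ (n : ℝ) * σ ^ 2 * C)
    (lam : ℝ) (hlam : 0 < lam)
    (ρ : ℕ → ℝ) (hρ : ∀ k, 0 < ρ k)
    (γ : ℝ) (hγ : 1 < γ)
    (hupdate : ∀ k, ρ (k + 1) = γ * ρ k)
    (x v u : ℕ → EuclideanSpace ℝ (Fin n))
    (hx : ∀ k, ∀ z : EuclideanSpace ℝ (Fin n),
      f (x (k + 1)) + ρ k / 2 * ‖x (k + 1) - (v k - u k)‖ ^ 2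
        ≤ f z + ρ k / 2 * ‖z - (v k - u k)‖ ^ 2)
    (hv : ∀ k, v (k + 1) = D (Real.sqrt (lam / ρ k)) (x (k + 1) + u k))
    (hu : ∀ k, u (k + 1) = u k + (x (k + 1) - v (k + 1))) :
    ∃ xs vs us : EuclideanSpace ℝ (Fin n),
      Tendsto (fun k => ‖x k - xs‖) atTop (𝓝 0) ∧
      Tendsto (fun k => ‖v k - vs‖) atTop (𝓝 0) ∧
      Tendsto (fun k => ‖u k - us‖) atTop (𝓝 0) := by

  set A : ℝ := L * Real.sqrt n with hA_def
  have hA0 : 0 ≤ A := le_trans (norm_nonneg _) (hgrad 0)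
  -- Step 1: first-order optimality
  have step1 : ∀ k, ‖x (k + 1) - (v k - u k)‖ ≤ A / ρ k := by
    intro k
    set a : EuclideanSpace ℝ (Fin n) := x (k + 1) with ha_def
    set c : EuclideanSpace ℝ (Fin n) := v k - u k with hc_def
    have hmin : IsLocalMin (fun z : EuclideanSpace ℝ (Fin n) => f z + ρ k / 2 * ‖z - c‖ ^ 2) a :=
      Filter.Eventually.of_forall (hx k)
    have h1 : HasFDerivAt (fun z : EuclideanSpace ℝ (Fin n) => z - c) (ContinuousLinearMap.id ℝ (EuclideanSpace ℝ (Fin n))) a :=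
      (hasFDerivAt_id a).sub_const c
    have h2 := h1.norm_sq
    have h3 := h2.const_mul (ρ k / 2)
    have h4 : HasFDerivAt (fun z : EuclideanSpace ℝ (Fin n) => ρ k / 2 * ‖z - c‖ ^ 2)
        (innerSL ℝ (ρ k • (a - c))) a := by
      refine h3.congr_fderiv ?_
      ext y
      simp [real_inner_smul_left]
      ring
    have h5 : HasFDerivAt (fun z : EuclideanSpace ℝ (Fin n) => f z + ρ k / 2 * ‖z - c‖ ^ 2)
        (fderiv ℝ f a + innerSL ℝ (ρ k • (a - c))) a := (hf a).hasFDerivAt.add h4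
    have h6 : fderiv ℝ f a + innerSL ℝ (ρ k • (a - c)) = 0 := by
      rw [← h5.fderiv]; exact hmin.fderiv_eq_zero
    have h7 : fderiv ℝ f a = -(innerSL ℝ (ρ k • (a - c))) :=
      eq_neg_of_add_eq_zero_left h6
    have h8 : HasGradientAt f (gradient f a) a := (hf a).hasGradientAt
    rw [hasGradientAt_iff_hasFDerivAt] at h8
    have h9 : fderiv ℝ f a = (InnerProductSpace.toDual ℝ (EuclideanSpace ℝ (Fin n))) (gradient f a) := h8.fderiv
    have h10 : ρ k * ‖a - c‖ ≤ A := by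
      calc ρ k * ‖a - c‖ = ‖innerSL ℝ (ρ k • (a - c))‖ := by
            rw [innerSL_apply_norm, norm_smul, Real.norm_eq_abs, abs_of_pos (hρ k)]
        _ = ‖fderiv ℝ f a‖ := by rw [h7, norm_neg]
        _ = ‖gradient f a‖ := by rw [h9]; exact (InnerProductSpace.toDual ℝ (EuclideanSpace ℝ (Fin n))).norm_map _
        _ ≤ A := hgrad a
    rw [le_div_iff₀ (hρ k), mul_comm]
    exact h10
  -- Step 2: bounded denoiser controls u
  set B : ℝ := Real.sqrt ((n : ℝ) * lam * C) with hB_def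
  have step2 : ∀ k, ‖u (k + 1)‖ ≤ B / Real.sqrt (ρ k) := by
    intro k
    have hq : 0 < lam / ρ k := div_pos hlam (hρ k)
    have hσ : 0 < Real.sqrt (lam / ρ k) := Real.sqrt_pos.mpr hq
    have h := hD _ hσ (x (k + 1) + u k)
    rw [Real.sq_sqrt hq.le] at h
    have heq : D (Real.sqrt (lam / ρ k)) (x (k + 1) + u k) - (x (k + 1) + u k)
        = -(u (k + 1)) := by
      rw [← hv k, hu k]; abel
    rw [heq, norm_neg] at h
    have h' : ‖u (k + 1)‖ ^ 2 ≤ (n : ℝ) * lam * C / ρ k := by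
      calc ‖u (k + 1)‖ ^ 2 ≤ (n : ℝ) * (lam / ρ k) * C := h
        _ = (n : ℝ) * lam * C / ρ k := by ring
    have hnn : 0 ≤ (n : ℝ) * lam * C / ρ k := div_nonneg (mul_nonneg (mul_nonneg (Nat.cast_nonneg n) hlam.le) hC) (hρ k).le
    have := (Real.le_sqrt (norm_nonneg _) hnn).mpr h'
    rwa [Real.sqrt_div (mul_nonneg (mul_nonneg (Nat.cast_nonneg n) hlam.le) hC) (ρ k)] at this
  -- geometric facts
  have hγ0 : (0 : ℝ) < γ := lt_trans one_pos hγ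
  have hsγ : 1 < Real.sqrt γ := by
    rw [show (1 : ℝ) = Real.sqrt 1 from Real.sqrt_one.symm]
    exact Real.sqrt_lt_sqrt zero_le_one hγ
  set r : ℝ := (Real.sqrt γ)⁻¹ with hr_def
  have hr0 : 0 < r := inv_pos.mpr (lt_trans one_pos hsγ)
  have hr1 : r < 1 := inv_lt_one_of_one_lt₀ hsγ
  have hsρ : ∀ k, Real.sqrt (ρ k) = Real.sqrt (ρ 0) * Real.sqrt γ ^ k := by
    intro k
    induction k with
    | zero => simp
    | succ m ih =>
        rw [hupdate m, Real.sqrt_mul hγ0.le, ih, pow_succ]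
        ring
  have hρeq : ∀ k, ρ k = ρ 0 * γ ^ k := by
    intro k
    induction k with
    | zero => simp
    | succ m ih => rw [hupdate m, ih, pow_succ]; ring
  have hsγγ : Real.sqrt γ ≤ γ := by
    nlinarith [Real.sq_sqrt hγ0.le, hsγ]
  have hρ0 : 0 < ρ 0 := hρ 0
  have hsρ0 : 0 < Real.sqrt (ρ 0) := Real.sqrt_pos.mpr hρ0
  -- geometric bounds
  have bound1 : ∀ k, B / Real.sqrt (ρ k) = B / Real.sqrt (ρ 0) * r ^ k := by
    intro k
    have hs : (0 : ℝ) < Real.sqrt γ ^ k := pow_pos (lt_trans one_pos hsγ) k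
    rw [hsρ k, hr_def, inv_pow]
    field_simp
  have bound2 : ∀ k, A / ρ k ≤ A / ρ 0 * r ^ k := by
    intro k
    have h1 : ρ 0 * Real.sqrt γ ^ k ≤ ρ k := by
      rw [hρeq k]
      have := pow_le_pow_left₀ (Real.sqrt_nonneg γ) hsγγ k
      nlinarith [pow_pos (lt_trans one_pos hsγ) k]
    have h2 : 0 < ρ 0 * Real.sqrt γ ^ k := by positivity
    calc A / ρ k ≤ A / (ρ 0 * Real.sqrt γ ^ k) := by gcongr
      _ = A / ρ 0 * r ^ k := by
          rw [hr_def, inv_pow]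
          field_simp
  set K : ℝ := B / Real.sqrt (ρ 0) + A / ρ 0 with hK_def
  -- v is Cauchy
  have dv : ∀ k, dist (v k) (v (k + 1)) ≤ K * r ^ k := by
    intro k
    have hdecomp : v (k + 1) - v k
        = -(u (k + 1)) + (x (k + 1) - (v k - u k)) := by
      rw [hu k]; abel
    have : ‖v (k + 1) - v k‖ ≤ ‖u (k + 1)‖ + ‖x (k + 1) - (v k - u k)‖ := by
      rw [hdecomp]
      exact (norm_add_le _ _).trans (by rw [norm_neg])
    have hle : ‖v (k + 1) - v k‖ ≤ B / Real.sqrt (ρ 0) * r ^ k + A / ρ 0 * r ^ k := by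
      refine this.trans (add_le_add ?_ ((step1 k).trans (bound2 k)))
      rw [← bound1 k]; exact step2 k
    rw [dist_eq_norm, norm_sub_rev]
    calc ‖v (k + 1) - v k‖ ≤ B / Real.sqrt (ρ 0) * r ^ k + A / ρ 0 * r ^ k := hle
      _ = K * r ^ k := by ring
  have hcauchy : CauchySeq v := cauchySeq_of_le_geometric r K hr1 dv
  obtain ⟨vs, hvs⟩ := cauchySeq_tendsto_of_complete hcauchy
  -- u tends to 0
  have hgeom : ∀ c : ℝ, Tendsto (fun k : ℕ => c * r ^ k) atTop (𝓝 0) := by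
    intro c
    have := (tendsto_pow_atTop_nhds_zero_of_lt_one hr0.le hr1).const_mul c
    simpa using this
  have htu1 : Tendsto (fun k => ‖u (k + 1)‖) atTop (𝓝 0) := by
    refine squeeze_zero (fun k => norm_nonneg _) (fun k => ?_) (hgeom (B / Real.sqrt (ρ 0)))
    exact (step2 k).trans_eq (bound1 k)
  have htu : Tendsto (fun k => ‖u k‖) atTop (𝓝 0) :=
    (tendsto_add_atTop_iff_nat 1).mp htu1
  -- v tends to vs in norm
  have htv : Tendsto (fun k => ‖v k - vs‖) atTop (𝓝 0) :=
    tendsto_iff_norm_sub_tendsto_zero.mp hvs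
  -- x tends to vs
  have htx1 : Tendsto (fun k => ‖x (k + 1) - vs‖) atTop (𝓝 0) := by
    have hb : ∀ k, ‖x (k + 1) - vs‖
        ≤ A / ρ 0 * r ^ k + (‖v k - vs‖ + ‖u k‖) := by
      intro k
      have hdecomp : x (k + 1) - vs
          = (x (k + 1) - (v k - u k)) + ((v k - vs) + -(u k)) := by abel
      calc ‖x (k + 1) - vs‖
          ≤ ‖x (k + 1) - (v k - u k)‖ + ‖(v k - vs) + -(u k)‖ := by
            rw [hdecomp]; exact norm_add_le _ _
        _ ≤ A / ρ 0 * r ^ k + (‖v k - vs‖ + ‖u k‖) := by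
            refine add_le_add ((step1 k).trans (bound2 k)) ?_
            exact (norm_add_le _ _).trans (by rw [norm_neg])
    have hlim : Tendsto (fun k => A / ρ 0 * r ^ k + (‖v k - vs‖ + ‖u k‖))
        atTop (𝓝 0) := by
      have := (hgeom (A / ρ 0)).add (htv.add htu)
      simpa using this
    exact squeeze_zero (fun k => norm_nonneg _) hb hlim
  have htx : Tendsto (fun k => ‖x k - vs‖) atTop (𝓝 0) :=
    (tendsto_add_atTop_iff_nat 1).mp htx1
  exact ⟨vs, vs, 0, htx, htv, by simpa using htu⟩
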